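/- Let r > 0 and let (P,D) be a unit-disk MinGMConn instance with radius r, i.e. D = {(p,q) ∈ P × P : x(p) < x(q), ‖p−q‖₁ ≤ r}. Fix offsets a,b ∈ ℝ such that no point of P lies on any of the grid lines {x = a + i·r/2 : i ∈ ℤ} and {y = b + j·r/2 : j ∈ ℤ}, and let the grid cells be the open squares between consecutive grid lines. Define the projection set S₂ = {(a + i·r/2, y(p)) : p ∈ P, i ∈ ℤ, |x(p) − (a + i·r/2)| ≤ r} ∪ {(x(p), b + j·r/2) : p ∈ P, j ∈ ℤ, |y(p) − (b + j·r/2)| ≤ r}. For every grid cell C containing a point of P, let Q_C be a feasible solution for the instance (P ∩ C, D ∩ (C × C)). Then the set S₂ ∪ ⋃_C Q_C is a feasible solution for (P,D). -/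

import Mathlib

abbrev Pt := ℝ × ℝ
abbrev Dem := Pt × Pt

noncomputable section

/-- ℓ1 distance in the plane. -/
def dist1 (p q : Pt) : ℝ := |p.1 - q.1| + |p.2 - q.2|

/-- Two points are aligned if they are vertically or horizontally aligned. -/
def Aligned (p q : Pt) : Prop := p.1 = q.1 ∨ p.2 = q.2

/-- `p` and `q` are Manhattan-connected in the point set `S`: the Manhattan graph on `S`
contains a rectilinear path from `p` to `q` of total length `‖p - q‖₁`. -/
def MConnected (S : Set Pt) (p q : Pt) : Prop :=
  ∃ (k : ℕ) (f : Fin (k + 1) → Pt),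
    f 0 = p ∧ f (Fin.last k) = q ∧ (∀ i, f i ∈ S) ∧
    (∀ i : Fin k, Aligned (f i.castSucc) (f i.succ)) ∧
    (∑ i : Fin k, dist1 (f i.castSucc) (f i.succ)) = dist1 p q

/-- `Q` is a feasible solution for the instance `(P, D)`. -/
def MFeasible (P : Set Pt) (D : Set Dem) (Q : Set Pt) : Prop :=
  ∀ d ∈ D, MConnected (P ∪ Q) d.1 d.2

/-- Minimum cardinality of a feasible solution. -/
def optN (P : Set Pt) (D : Set Dem) : ℕ :=
  sInf {n | ∃ Q : Finset Pt, MFeasible P D ↑Q ∧ Q.card = n}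

/-- The closed axis-aligned rectangle spanned by `p` and `q`. -/
def Rect (p q : Pt) : Set Pt :=
  {z | min p.1 q.1 ≤ z.1 ∧ z.1 ≤ max p.1 q.1 ∧ min p.2 q.2 ≤ z.2 ∧ z.2 ≤ max p.2 q.2}

/-- The interior of the axis-aligned rectangle spanned by `p` and `q`. -/
def RectInt (p q : Pt) : Set Pt :=
  {z | min p.1 q.1 < z.1 ∧ z.1 < max p.1 q.1 ∧ min p.2 q.2 < z.2 ∧ z.2 < max p.2 q.2}

/-- The four corners of the rectangle spanned by `p` and `q`. -/
def Corners (p q : Pt) : Set Pt := {(p.1, p.2), (p.1, q.2), (q.1, p.2), (q.1, q.2)}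

/-- Two demand rectangles are non-conflicting if neither contains a corner of the other
in its interior. -/
def NonConflicting (d e : Dem) : Prop :=
  (∀ c ∈ Corners e.1 e.2, c ∉ RectInt d.1 d.2) ∧
  (∀ c ∈ Corners d.1 d.2, c ∉ RectInt e.1 e.2)

/-- `IRN D` : maximum cardinality of an independent (pairwise non-conflicting) subset of `D`. -/
def IRN (D : Set Dem) : ℕ :=
  sSup {n | ∃ D' : Finset Dem, ↑D' ⊆ D ∧ D'.card = n ∧
    ∀ d ∈ D', ∀ e ∈ D', d ≠ e → NonConflicting d e}

/-- The vertical segment at `x = a` spanning the `y`-range between `y1` and `y2`. -/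
def VSeg (a y1 y2 : ℝ) : Set Pt :=
  {z | z.1 = a ∧ min y1 y2 ≤ z.2 ∧ z.2 ≤ max y1 y2}

/-- A finite set of demands is vertically separable: its demand rectangles can be ordered
`R₁, …, R_k` with vertical segments `ℓ₁, …, ℓ_k`, where `ℓᵢ` connects the interior of the top
boundary of `Rᵢ` with the interior of its bottom boundary and avoids `R_j` for all `j > i`. -/
def VertSeparable (D' : Finset Dem) : Prop :=
  ∃ (e : Fin D'.card → Dem) (a : Fin D'.card → ℝ),
    Function.Injective e ∧ (∀ i, e i ∈ D') ∧
    (∀ i, min (e i).1.1 (e i).2.1 < a i ∧ a i < max (e i).1.1 (e i).2.1) ∧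
    ∀ i j : Fin D'.card, i < j →
      VSeg (a i) (e i).1.2 (e i).2.2 ∩ Rect (e j).1 (e j).2 = ∅

/-- `VSN D` : maximum cardinality of a vertically separable subset of `D`. -/
def VSN (D : Set Dem) : ℕ :=
  sSup {n | ∃ D' : Finset Dem, ↑D' ⊆ D ∧ D'.card = n ∧ VertSeparable D'}

/-- `λ(p,q)` : the left vertical side of the demand rectangle `R(p,q)`. -/
def LSeg (d : Dem) : Set Pt := VSeg d.1.1 d.1.2 d.2.2

/-- `ρ(p,q)` : the right vertical side of the demand rectangle `R(p,q)`. -/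
def RSeg (d : Dem) : Set Pt := VSeg d.2.1 d.1.2 d.2.2

/-- A left boundary independent set: the left sides are pairwise non-overlapping. -/
def LeftBIS (D' : Finset Dem) : Prop :=
  ∀ d ∈ D', ∀ e ∈ D', d ≠ e → Set.Subsingleton (LSeg d ∩ LSeg e)

/-- A right boundary independent set: the right sides are pairwise non-overlapping. -/
def RightBIS (D' : Finset Dem) : Prop :=
  ∀ d ∈ D', ∀ e ∈ D', d ≠ e → Set.Subsingleton (RSeg d ∩ RSeg e)

/-- `ISN D` : maximum cardinality of a (left or right) boundary independent subset of `D`. -/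
def ISN (D : Set Dem) : ℕ :=
  sSup {n | ∃ D' : Finset Dem, ↑D' ⊆ D ∧ D'.card = n ∧ (LeftBIS D' ∨ RightBIS D')}

/-- `(P, D)` is a MinGMConn instance: demands are between input points, ordered by
`x`-coordinate. -/
def IsInstance (P : Finset Pt) (D : Finset Dem) : Prop :=
  ∀ d ∈ D, d.1 ∈ P ∧ d.2 ∈ P ∧ d.1.1 < d.2.1

/-- The points of `P` have pairwise distinct `x`-coordinates. -/
def DistinctX (P : Finset Pt) : Prop := ∀ p ∈ P, ∀ q ∈ P, p ≠ q → p.1 ≠ q.1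

/-- The points of `P` have pairwise distinct `y`-coordinates. -/
def DistinctY (P : Finset Pt) : Prop := ∀ p ∈ P, ∀ q ∈ P, p ≠ q → p.2 ≠ q.2

end

noncomputable section

/-- The `i`-th open vertical strip determined by boundaries `b` (with `b 0 = ⊥`, `b s = ⊤`). -/
def strip (s : ℕ) (b : Fin (s + 1) → EReal) (i : Fin s) : Set Pt :=
  {z | b i.castSucc < (z.1 : EReal) ∧ (z.1 : EReal) < b i.succ}

/-- `b` describes a strip subdivision into `s` vertical strips via `s - 1` vertical lines,
none of which passes through a point of `P`. -/
def IsStripSubdivision (s : ℕ) (b : Fin (s + 1) → EReal) (P : Finset Pt) : Prop :=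
  1 ≤ s ∧ StrictMono b ∧ b 0 = ⊥ ∧ b (Fin.last s) = ⊤ ∧
    ∀ p ∈ P, ∀ i : Fin (s + 1), (p.1 : EReal) ≠ b i

/-- The projections `π_𝒮(P)` of the points of `P` onto the adjacent strip boundaries. -/
def stripProj (s : ℕ) (b : Fin (s + 1) → EReal) (P : Set Pt) : Set Pt :=
  {z | ∃ p ∈ P, ∃ i : Fin s, p ∈ strip s b i ∧
    ((i.val ≠ 0 ∧ z = ((b i.castSucc).toReal, p.2)) ∨
     (i.val + 1 ≠ s ∧ z = ((b i.succ).toReal, p.2)))}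

/-- The demand set `π_𝒮(D)` of the inter-strip instance: demands between points in
different, non-adjacent strips, projected to the adjacent strip boundaries. -/
def stripDem (s : ℕ) (b : Fin (s + 1) → EReal) (D : Set Dem) : Set Dem :=
  {d | ∃ pq ∈ D, ∃ i j : Fin s,
    pq.1 ∈ strip s b i ∧ pq.2 ∈ strip s b j ∧ i.val + 2 ≤ j.val ∧
    d = (((b i.succ).toReal, pq.1.2), ((b j.castSucc).toReal, pq.2.2))}

/-- `p 0, …, p n` form a triangular instance of size `n` :
`x`-coordinates strictly increasing, while `p 1, …, p n` form a descending diagonal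
lying to the top-right of `p 0`. -/
def IsTriangular (n : ℕ) (p : Fin (n + 1) → Pt) : Prop :=
  (∀ i j : Fin (n + 1), i < j → (p i).1 < (p j).1) ∧
  (∀ i j : Fin (n + 1), i ≠ 0 → i < j → (p j).2 < (p i).2) ∧
  (∀ i : Fin (n + 1), i ≠ 0 → (p 0).2 < (p i).2)

/-- The point set of a triangular instance. -/
def triP (n : ℕ) (p : Fin (n + 1) → Pt) : Finset Pt := Finset.image p Finset.univ

/-- The demand set of a triangular instance: `(p 0, p i)` for `1 ≤ i ≤ n`. -/
def triD (n : ℕ) (p : Fin (n + 1) → Pt) : Finset Dem :=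
  Finset.image (fun i => (p 0, p i)) (Finset.univ.filter fun i : Fin (n + 1) => i ≠ 0)

/-- The triangular grid of a triangular instance. -/
def triGrid (n : ℕ) (p : Fin (n + 1) → Pt) : Set Pt :=
  {z | (∃ i, z.1 = (p i).1) ∧ (∃ j, z.2 = (p j).2) ∧
    ∃ i : Fin (n + 1), i ≠ 0 ∧ z ∈ Rect (p 0) (p i)}

/-- `Q` is arboreally satisfied: for every non-aligned pair of its points, the rectangle
they span contains a third point of `Q`. -/
def ArboreallySatisfied (Q : Finset Pt) : Prop :=
  ∀ p ∈ Q, ∀ q ∈ Q, ¬ Aligned p q → ∃ r ∈ Q, r ≠ p ∧ r ≠ q ∧ r ∈ Rect p q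

/-- The Manhattan graph on a finite point set `S`. -/
def manhattanGraph (S : Finset Pt) : SimpleGraph {x : Pt // x ∈ S} where
  Adj a b := a ≠ b ∧ Aligned a.1 b.1
  symm := ⟨fun _ _ h => ⟨h.1.symm, h.2.imp Eq.symm Eq.symm⟩⟩
  loopless := ⟨fun _ h => h.1 rfl⟩

/-- The demand graph of an instance `(P, D)`. -/
def demandGraph (P : Finset Pt) (D : Finset Dem) : SimpleGraph {x : Pt // x ∈ P} where
  Adj a b := a ≠ b ∧ (((a : Pt), (b : Pt)) ∈ D ∨ ((b : Pt), (a : Pt)) ∈ D)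
  symm := ⟨fun _ _ h => ⟨h.1.symm, h.2.symm⟩⟩
  loopless := ⟨fun _ h => h.1 rfl⟩

/-- `C` is an axis-aligned rectangle: a product of two intervals. -/
def IsAxisRect (C : Set Pt) : Prop :=
  ∃ I J : Set ℝ, I.OrdConnected ∧ J.OrdConnected ∧ C = I ×ˢ J

end

section Aux

lemma mconn_mono {S T : Set Pt} (h : S ⊆ T) {p q : Pt} (hc : MConnected S p q) :
    MConnected T p q := by
  obtain ⟨k, f, h1, h2, h3, h4, h5⟩ := hc
  exact ⟨k, f, h1, h2, fun i => h (h3 i), h4, h5⟩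

lemma mconn4 (S : Set Pt) (p A B q : Pt) (hp : p ∈ S) (hA : A ∈ S) (hB : B ∈ S) (hq : q ∈ S)
    (h1 : Aligned p A) (h2 : Aligned A B) (h3 : Aligned B q)
    (hsum : dist1 p A + dist1 A B + dist1 B q = dist1 p q) :
    MConnected S p q := by
  refine ⟨3, ![p, A, B, q], rfl, rfl, ?_, ?_, ?_⟩
  · intro i; fin_cases i <;> assumption
  · intro i; fin_cases i <;> simpa using ‹_›
  · rw [Fin.sum_univ_three]
    simpa using hsum

lemma sum_x (p q : Pt) (g : ℝ) (h1 : p.1 ≤ g) (h2 : g ≤ q.1) :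
    dist1 p (g, p.2) + dist1 (g, p.2) (g, q.2) + dist1 (g, q.2) q = dist1 p q := by
  simp only [dist1, sub_self, abs_zero]
  rw [abs_of_nonpos (by linarith : p.1 - g ≤ 0),
      abs_of_nonpos (by linarith : g - q.1 ≤ 0),
      abs_of_nonpos (by linarith : p.1 - q.1 ≤ 0)]
  ring

lemma sum_y (p q : Pt) (h : ℝ) (h1 : p.2 ≤ h) (h2 : h ≤ q.2) :
    dist1 p (p.1, h) + dist1 (p.1, h) (q.1, h) + dist1 (q.1, h) q = dist1 p q := by
  simp only [dist1, sub_self, abs_zero]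
  rw [abs_of_nonpos (by linarith : p.2 - h ≤ 0),
      abs_of_nonpos (by linarith : h - q.2 ≤ 0),
      abs_of_nonpos (by linarith : p.2 - q.2 ≤ 0)]
  ring

lemma sum_y' (p q : Pt) (h : ℝ) (h1 : q.2 ≤ h) (h2 : h ≤ p.2) :
    dist1 p (p.1, h) + dist1 (p.1, h) (q.1, h) + dist1 (q.1, h) q = dist1 p q := by
  simp only [dist1, sub_self, abs_zero]
  rw [abs_of_nonneg (by linarith : 0 ≤ p.2 - h),
      abs_of_nonneg (by linarith : 0 ≤ h - q.2),
      abs_of_nonneg (by linarith : 0 ≤ p.2 - q.2)]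
  ring

lemma cell_idx {c x r : ℝ} (hr : 0 < r) (hx : ∀ i : ℤ, x ≠ c + i * r) :
    c + (⌊(x - c) / r⌋ : ℤ) * r < x ∧ x < c + ((⌊(x - c) / r⌋ : ℤ) + 1) * r := by
  constructor
  · have h := Int.floor_le ((x - c) / r)
    rw [le_div_iff₀ hr] at h
    exact lt_of_le_of_ne (by linarith) (fun he => hx _ he.symm)
  · have h := Int.lt_floor_add_one ((x - c) / r)
    rw [div_lt_iff₀ hr] at h
    push_cast
    push_cast at h
    linarith

end Aux

/-- For a unit-disk instance with radius `r`, the grid projections `S₂` together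
with feasible solutions of all cell sub-instances form a feasible solution for `(P,D)`. -/
theorem stmt19 (r : ℝ) (hr : 0 < r) (P : Finset Pt) (D : Finset Dem)
    (hD : ∀ d : Dem, d ∈ D ↔
      (d.1 ∈ P ∧ d.2 ∈ P ∧ d.1.1 < d.2.1 ∧ dist1 d.1 d.2 ≤ r))
    (a b : ℝ)
    (hgrid : ∀ p ∈ P,
      (∀ i : ℤ, p.1 ≠ a + i * (r / 2)) ∧ (∀ j : ℤ, p.2 ≠ b + j * (r / 2)))
    (cell : ℤ → ℤ → Set Pt)
    (hcell : ∀ i j : ℤ, cell i j =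
      {z : Pt | a + i * (r / 2) < z.1 ∧ z.1 < a + (i + 1) * (r / 2) ∧
                b + j * (r / 2) < z.2 ∧ z.2 < b + (j + 1) * (r / 2)})
    (S2 : Set Pt)
    (hS2 : S2 = {z : Pt | ∃ p ∈ P,
      (∃ i : ℤ, z = (a + i * (r / 2), p.2) ∧ |p.1 - (a + i * (r / 2))| ≤ r) ∨
      (∃ j : ℤ, z = (p.1, b + j * (r / 2)) ∧ |p.2 - (b + j * (r / 2))| ≤ r)})
    (Qc : ℤ → ℤ → Set Pt)
    (hQc : ∀ i j : ℤ, (∃ p ∈ P, (p : Pt) ∈ cell i j) →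
      MFeasible (↑P ∩ cell i j) {d : Dem | d ∈ D ∧ d.1 ∈ cell i j ∧ d.2 ∈ cell i j}
        (Qc i j)) :
    MFeasible ↑P ↑D
      (S2 ∪ ⋃ (i : ℤ) (j : ℤ) (_ : ∃ p ∈ P, (p : Pt) ∈ cell i j), Qc i j) := by
  intro d hd
  simp only [Finset.mem_coe] at hd
  obtain ⟨hp, hq, hxy, hdist⟩ := (hD d).mp hd
  set p := d.1 with hp' ; set q := d.2 with hq'
  have hr2 : (0 : ℝ) < r / 2 := by linarith
  have hd1 : |p.1 - q.1| + |p.2 - q.2| ≤ r := hdist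
  set T : Set Pt := ↑P ∪ (S2 ∪ ⋃ (i : ℤ) (j : ℤ) (_ : ∃ p ∈ P, (p : Pt) ∈ cell i j), Qc i j)
    with hT
  have hpx := cell_idx hr2 (fun i => (hgrid p hp).1 i)
  have hpy := cell_idx hr2 (fun j => (hgrid p hp).2 j)
  have hqx := cell_idx hr2 (fun i => (hgrid q hq).1 i)
  have hqy := cell_idx hr2 (fun j => (hgrid q hq).2 j)
  set ip : ℤ := ⌊(p.1 - a) / (r / 2)⌋ with hipd
  set iq : ℤ := ⌊(q.1 - a) / (r / 2)⌋ with hiqd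
  set jp : ℤ := ⌊(p.2 - b) / (r / 2)⌋ with hjpd
  set jq : ℤ := ⌊(q.2 - b) / (r / 2)⌋ with hjqd
  have hpT : p ∈ T := Or.inl hp
  have hqT : q ∈ T := Or.inl hq
  by_cases hsame : ip = iq ∧ jp = jq
  · -- same cell: use the cell solution
    have hpc : p ∈ cell ip jp := by rw [hcell]; exact ⟨hpx.1, hpx.2, hpy.1, hpy.2⟩
    have hqc : q ∈ cell ip jp := by
      rw [hcell]
      refine ⟨?_, ?_, ?_, ?_⟩
      · rw [hsame.1]; exact hqx.1
      · rw [hsame.1]; exact hqx.2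
      · rw [hsame.2]; exact hqy.1
      · rw [hsame.2]; exact hqy.2
    have hex : ∃ z ∈ P, (z : Pt) ∈ cell ip jp := ⟨p, hp, hpc⟩
    have := hQc ip jp hex d ⟨hd, hpc, hqc⟩
    refine mconn_mono ?_ this
    intro z hz
    rcases hz with ⟨hz1, _⟩ | hz2
    · exact Or.inl hz1
    · exact Or.inr (Or.inr (Set.mem_iUnion.mpr ⟨ip, Set.mem_iUnion.mpr ⟨jp,
        Set.mem_iUnion.mpr ⟨hex, hz2⟩⟩⟩))
  · by_cases hii : ip = iq
    · -- same column, different rows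
      have hjj : jp ≠ jq := fun h => hsame ⟨hii, h⟩
      rcases lt_or_gt_of_ne hjj with hlt | hgt
      · -- p below q : h = b + jq * (r/2)
        set h : ℝ := b + jq * (r / 2) with hhd
        have hj1 : (jp : ℝ) + 1 ≤ (jq : ℝ) := by exact_mod_cast hlt
        have hph : p.2 < h := by
          rw [hhd]
          have := hpy.2
          have : p.2 < b + ((jp : ℝ) + 1) * (r / 2) := by push_cast at this ⊢; linarith
          have h3 := mul_le_mul_of_nonneg_right hj1 (le_of_lt hr2)
          linarith
        have hqh : h < q.2 := hqy.1
        have hy : |p.2 - q.2| ≤ r := by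
          have := abs_nonneg (p.1 - q.1); linarith
        have hpb : |p.2 - h| ≤ r := by
          rw [abs_of_nonpos (by linarith)]
          rw [abs_of_nonpos (by linarith : p.2 - q.2 ≤ 0)] at hy
          linarith
        have hqb : |q.2 - h| ≤ r := by
          rw [abs_of_nonneg (by linarith)]
          rw [abs_of_nonpos (by linarith : p.2 - q.2 ≤ 0)] at hy
          linarith
        have hA : ((p.1, h) : Pt) ∈ T := by
          refine Or.inr (Or.inl ?_)
          rw [hS2]
          exact ⟨p, hp, Or.inr ⟨jq, rfl, hpb⟩⟩
        have hB : ((q.1, h) : Pt) ∈ T := by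
          refine Or.inr (Or.inl ?_)
          rw [hS2]
          exact ⟨q, hq, Or.inr ⟨jq, rfl, hqb⟩⟩
        exact mconn4 T p (p.1, h) (q.1, h) q hpT hA hB hqT (Or.inl rfl) (Or.inr rfl)
          (Or.inl rfl) (sum_y p q h (le_of_lt hph) (le_of_lt hqh))
      · -- q below p : h = b + jp * (r/2)
        set h : ℝ := b + jp * (r / 2) with hhd
        have hj1 : (jq : ℝ) + 1 ≤ (jp : ℝ) := by exact_mod_cast hgt
        have hqh : q.2 < h := by
          rw [hhd]
          have := hqy.2
          have : q.2 < b + ((jq : ℝ) + 1) * (r / 2) := by push_cast at this ⊢; linarith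
          have h3 := mul_le_mul_of_nonneg_right hj1 (le_of_lt hr2)
          linarith
        have hph : h < p.2 := hpy.1
        have hy : |p.2 - q.2| ≤ r := by
          have := abs_nonneg (p.1 - q.1); linarith
        have hpb : |p.2 - h| ≤ r := by
          rw [abs_of_nonneg (by linarith)]
          rw [abs_of_nonneg (by linarith : 0 ≤ p.2 - q.2)] at hy
          linarith
        have hqb : |q.2 - h| ≤ r := by
          rw [abs_of_nonpos (by linarith)]
          rw [abs_of_nonneg (by linarith : 0 ≤ p.2 - q.2)] at hy
          linarith
        have hA : ((p.1, h) : Pt) ∈ T := by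
          refine Or.inr (Or.inl ?_)
          rw [hS2]
          exact ⟨p, hp, Or.inr ⟨jp, rfl, hpb⟩⟩
        have hB : ((q.1, h) : Pt) ∈ T := by
          refine Or.inr (Or.inl ?_)
          rw [hS2]
          exact ⟨q, hq, Or.inr ⟨jp, rfl, hqb⟩⟩
        exact mconn4 T p (p.1, h) (q.1, h) q hpT hA hB hqT (Or.inl rfl) (Or.inr rfl)
          (Or.inl rfl) (sum_y' p q h (le_of_lt hqh) (le_of_lt hph))
    · -- different columns: ip < iq
      have hle : ip ≤ iq := by
        rw [hipd, hiqd]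
        apply Int.floor_le_floor
        have hle' : p.1 ≤ q.1 := le_of_lt hxy
        gcongr
      have hlt : ip < iq := lt_of_le_of_ne hle hii
      set g : ℝ := a + iq * (r / 2) with hgd
      have hi1 : (ip : ℝ) + 1 ≤ (iq : ℝ) := by exact_mod_cast hlt
      have hpg : p.1 < g := by
        rw [hgd]
        have := hpx.2
        have : p.1 < a + ((ip : ℝ) + 1) * (r / 2) := by push_cast at this ⊢; linarith
        nlinarith
      have hqg : g < q.1 := hqx.1
      have hx : |p.1 - q.1| ≤ r := by
        have := abs_nonneg (p.2 - q.2); linarith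
      have hxr : q.1 - p.1 ≤ r := by
        rw [abs_of_nonpos (by linarith)] at hx; linarith
      have hpb : |p.1 - g| ≤ r := by rw [abs_of_nonpos (by linarith)]; linarith
      have hqb : |q.1 - g| ≤ r := by rw [abs_of_nonneg (by linarith)]; linarith
      have hA : ((g, p.2) : Pt) ∈ T := by
        refine Or.inr (Or.inl ?_)
        rw [hS2]
        exact ⟨p, hp, Or.inl ⟨iq, rfl, hpb⟩⟩
      have hB : ((g, q.2) : Pt) ∈ T := by
        refine Or.inr (Or.inl ?_)
        rw [hS2]
        exact ⟨q, hq, Or.inl ⟨iq, rfl, hqb⟩⟩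
      exact mconn4 T p (g, p.2) (g, q.2) q hpT hA hB hqT (Or.inr rfl) (Or.inl rfl)
        (Or.inr rfl) (sum_x p q g (le_of_lt hpg) (le_of_lt hqg))
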